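/- Let G be a finite soluble group admitting a coprime automorphism α with G = [G,α], and suppose |I_{F(G)}(α)| ≤ n where F(G) is the Fitting subgroup. Then there exists an integer j ≤ n! such that α^j centralizes F(G), and consequently α^j = 1; in particular the order of α is at most n!. -/

import Mathlib

/-- The subgroup `[G,α]` generated by all `g⁻¹ · g^α`. -/
def autCommutator {G : Type*} [Group G] (α : MulAut G) : Subgroup G :=
  Subgroup.closure (Set.range fun g : G => g⁻¹ * α g)

/-- The Fitting subgroup of a group: the join of all normal nilpotent subgroups. -/
def fittingSubgroup (G : Type*) [Group G] : Subgroup G :=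
  ⨆ (N : Subgroup G) (_ : N.Normal) (_ : Group.IsNilpotent N), N

section Helpers
variable {G : Type*} [Group G]

lemma le_fitting {N : Subgroup G} (hn : N.Normal) (hnil : Group.IsNilpotent N) :
    N ≤ fittingSubgroup G := by
  refine le_trans ?_ (le_iSup _ N)
  refine le_trans ?_ (le_iSup _ hn)
  exact le_iSup (fun _ : Group.IsNilpotent N => N) hnil

lemma fitting_mem_map (α : MulAut G) {g : G} (hg : g ∈ fittingSubgroup G) :
    α g ∈ fittingSubgroup G := by
  have h : fittingSubgroup G ≤ (fittingSubgroup G).comap α.toMonoidHom := by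
    refine iSup_le fun N => iSup_le fun hN => iSup_le fun hnil => ?_
    rw [← Subgroup.map_le_iff_le_comap]
    refine le_fitting (hN.map _ α.surjective) ?_
    exact nilpotent_of_mulEquiv (Subgroup.equivMapOfInjective N _ α.injective)
  exact h hg

lemma fitting_normal : (fittingSubgroup G).Normal :=
  ⟨fun x hx g => fitting_mem_map (MulAut.conj g) hx⟩

lemma nilpotent_of_comm {K : Subgroup G}
    (h : ∀ x ∈ (⁅K, K⁆ : Subgroup G), ∀ y ∈ K, x * y = y * x) :
    Group.IsNilpotent ↥K := by
  refine nilpotent_iff_lowerCentralSeries.2 ⟨2, ?_⟩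
  refine Subgroup.lowerCentralSeries_succ_eq_bot ⊤ ?_
  intro x hx
  have hxval : (x : G) ∈ (⁅K, K⁆ : Subgroup G) := by
    have : (x : G) ∈ Subgroup.map K.subtype ((⊤ : Subgroup ↥K).lowerCentralSeries 1) :=
      ⟨x, hx, rfl⟩
    rwa [Subgroup.top_lowerCentralSeries_one, commutator_def, Subgroup.map_commutator,
      ← MonoidHom.range_eq_map, K.range_subtype] at this
  rw [Subgroup.mem_center_iff]
  intro y
  exact Subtype.ext (h x hxval y y.2).symm

def derivedFrom (C : Subgroup G) : ℕ → Subgroup G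
  | 0 => C
  | k + 1 => ⁅derivedFrom C k, derivedFrom C k⁆

lemma centralizer_fitting_le [Group.IsSolvable G] :
    Subgroup.centralizer (fittingSubgroup G : Set G) ≤ fittingSubgroup G := by
  set F := fittingSubgroup G with hF
  set C := Subgroup.centralizer (F : Set G) with hC
  have hCn : C.Normal := by
    constructor
    intro c hc g
    rw [Subgroup.mem_centralizer_iff]
    intro x hx
    have hx' : g⁻¹ * x * g ∈ F := by
      have := fitting_normal.conj_mem x hx g⁻¹
      simpa using this
    have hcomm := Subgroup.mem_centralizer_iff.mp hc _ hx'
    have := congrArg (fun y => g * y * g⁻¹) hcomm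
    simpa [mul_assoc] using this
  set D := derivedFrom C with hDdef
  have hD0 : D 0 = C := rfl
  have hDsucc : ∀ k, D (k + 1) = ⁅D k, D k⁆ := fun k => rfl
  have hDn : ∀ k, (D k).Normal := by
    intro k
    induction k with
    | zero => exact hCn
    | succ k ih => rw [hDsucc]; exact @Subgroup.commutator_normal _ _ _ _ ih ih
  have hDC : ∀ k, D k ≤ C := by
    intro k
    induction k with
    | zero => exact le_rfl
    | succ k ih =>
      rw [hDsucc]
      exact le_trans (@Subgroup.commutator_le_right _ _ _ _ (hDn k)) ih
  have hDder : ∀ k, D k ≤ derivedSeries G k := by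
    intro k
    induction k with
    | zero => exact le_top
    | succ k ih =>
      rw [hDsucc]
      exact Subgroup.commutator_mono ih ih
  obtain ⟨m, hm⟩ := Group.IsSolvable.solvable (G := G)
  have hstep : ∀ k, D (k + 1) ≤ F → D k ≤ F := by
    intro k hk
    have hnil : Group.IsNilpotent ↥(D k) := by
      refine nilpotent_of_comm (K := D k) ?_
      intro x hx y hy
      have hxF : x ∈ F := hk (by rw [hDsucc]; exact hx)
      have hyC : y ∈ C := hDC k hy
      exact Subgroup.mem_centralizer_iff.mp hyC x hxF
    exact le_fitting (hDn k) hnil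
  have hall : ∀ k, D k ≤ F → C ≤ F := by
    intro k
    induction k with
    | zero => intro h; exact h
    | succ k ih => intro h; exact ih (hstep k h)
  exact hall m (le_trans (hDder m) (hm.le.trans bot_le))

end Helpers

theorem stmt_12 {G : Type*} [Group G] [Finite G] [Group.IsSolvable G] (α : MulAut G)
    (hcop : Nat.Coprime (orderOf α) (Nat.card G))
    (hGA : autCommutator α = ⊤) (n : ℕ)
    (hI : Nat.card {x : G // ∃ g ∈ fittingSubgroup G, g⁻¹ * α g = x} ≤ n) :
    (∃ j : ℕ, 1 ≤ j ∧ j ≤ n.factorial ∧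
      (∀ x ∈ fittingSubgroup G, (α ^ j) x = x) ∧ α ^ j = 1) ∧
      orderOf α ≤ n.factorial := by
  set F := fittingSubgroup G with hFdef
  have hFn : F.Normal := fitting_normal
  have hαkF : ∀ (k : ℕ) {g : G}, g ∈ F → (α ^ k) g ∈ F := by
    intro k
    induction k with
    | zero => intro g hg; simpa using hg
    | succ k ih =>
      intro g hg
      rw [pow_succ, MulAut.mul_apply]
      exact ih (fitting_mem_map α hg)
  -- the set I as a subtype, and the permutation induced by α
  set I := {x : G // ∃ g ∈ fittingSubgroup G, g⁻¹ * α g = x} with hIdef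
  haveI : Fintype I := Fintype.ofFinite _
  haveI : DecidableEq I := Classical.decEq _
  have hf : ∀ x : I, ∃ g ∈ fittingSubgroup G, g⁻¹ * α g = α x.val := by
    rintro ⟨x, g, hg, rfl⟩
    exact ⟨α g, fitting_mem_map α hg, by rw [map_mul, map_inv]⟩
  set f : I → I := fun x => ⟨α x.val, hf x⟩ with hfdef
  have hinj : Function.Injective f := fun a b h =>
    Subtype.ext (α.injective (congrArg Subtype.val h))
  set σ : Equiv.Perm I := Equiv.ofBijective f (Finite.injective_iff_bijective.mp hinj)
    with hσdef
  have hσpow : ∀ (k : ℕ) (x : I), ((σ ^ k) x).val = (α ^ k) x.val := by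
    intro k
    induction k with
    | zero => intro x; simp
    | succ k ih =>
      intro x
      rw [pow_succ', pow_succ', Equiv.Perm.mul_apply, MulAut.mul_apply]
      calc (σ ((σ ^ k) x)).val = α ((σ ^ k) x).val := rfl
        _ = α ((α ^ k) x.val) := by rw [ih]
  have hσord : σ ^ n.factorial = 1 := by
    rw [← orderOf_dvd_iff_pow_eq_one]
    refine dvd_trans orderOf_dvd_card ?_
    rw [Fintype.card_perm]
    refine Nat.factorial_dvd_factorial ?_
    rw [← Nat.card_eq_fintype_card]
    exact hI
  have hfixI : ∀ x : G, (∃ g ∈ fittingSubgroup G, g⁻¹ * α g = x) →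
      (α ^ n.factorial) x = x := by
    intro x hx
    have := hσpow n.factorial ⟨x, hx⟩
    rw [hσord] at this
    exact this.symm
  set β := α ^ n.factorial with hβdef
  -- β fixes each g⁻¹ (α^k g) for g ∈ F
  have claim1 : ∀ (k : ℕ), ∀ g ∈ F, β (g⁻¹ * (α ^ k) g) = g⁻¹ * (α ^ k) g := by
    intro k
    induction k with
    | zero => intro g hg; simp
    | succ k ih =>
      intro g hg
      have h2 : g⁻¹ * (α ^ (k + 1)) g =
          (g⁻¹ * (α ^ k) g) * (((α ^ k) g)⁻¹ * α ((α ^ k) g)) := by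
        rw [pow_succ', MulAut.mul_apply]
        group
      rw [h2, map_mul, ih g hg, hfixI _ ⟨(α ^ k) g, hαkF k hg, rfl⟩]
  -- key cancellation: if β fixes t = g⁻¹ β g then β g = g
  have hβm : β ^ orderOf α = 1 := by
    rw [hβdef, ← pow_mul, mul_comm, pow_mul, pow_orderOf_eq_one, one_pow]
  have keylocal : ∀ g t : G, β t = t → g⁻¹ * β g = t → β g = g := by
    intro g t ht heq
    have hβg : β g = g * t := by rw [← heq]; group
    have hpow : ∀ k : ℕ, (β ^ k) g = g * t ^ k := by
      intro k
      induction k with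
      | zero => simp
      | succ k ih =>
        rw [pow_succ', MulAut.mul_apply, ih, map_mul, map_pow, ht, hβg,
          pow_succ']
        group
    have hm := hpow (orderOf α)
    rw [hβm] at hm
    have ht1 : t ^ orderOf α = 1 := by
      have : g * 1 = g * t ^ orderOf α := by simpa using hm
      exact (mul_left_cancel this).symm
    have hdvd1 : orderOf t ∣ orderOf α := orderOf_dvd_of_pow_eq_one ht1
    have hdvd2 : orderOf t ∣ Nat.card G := orderOf_dvd_natCard t
    have : orderOf t = 1 :=
      Nat.eq_one_of_dvd_coprimes hcop hdvd1 hdvd2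
    rw [orderOf_eq_one_iff] at this
    rw [hβg, this, mul_one]
  -- β fixes F pointwise
  have hFfix : ∀ g ∈ F, β g = g := by
    intro g hg
    exact keylocal g (g⁻¹ * β g) (claim1 n.factorial g hg) rfl
  -- g⁻¹ β g centralizes F
  have hcent : ∀ g : G, g⁻¹ * β g ∈ Subgroup.centralizer (F : Set G) := by
    intro g
    rw [Subgroup.mem_centralizer_iff]
    intro x hx
    have hconj : g * x * g⁻¹ ∈ F := hFn.conj_mem x hx g
    have h1 : β (g * x * g⁻¹) = g * x * g⁻¹ := hFfix _ hconj
    have h2 : β g * x * (β g)⁻¹ = g * x * g⁻¹ := by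
      rw [← h1, map_mul, map_mul, map_inv, hFfix x hx]
    have h3 := congrArg (fun y => g⁻¹ * y * β g) h2
    simp only [mul_assoc, inv_mul_cancel, mul_one, mul_inv_cancel_left,
      inv_mul_cancel_left] at h3 ⊢
    rw [← h3]
  -- hence β = 1
  have hGfix : ∀ g : G, β g = g := by
    intro g
    have htF : g⁻¹ * β g ∈ F := centralizer_fitting_le (hcent g)
    exact keylocal g (g⁻¹ * β g) (hFfix _ htF) rfl
  have hβ1 : β = 1 := by
    ext g
    exact hGfix g
  refine ⟨⟨n.factorial, Nat.one_le_iff_ne_zero.mpr (Nat.factorial_ne_zero n), le_rfl,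
    ?_, hβ1⟩, ?_⟩
  · intro x _
    show β x = x
    rw [hβ1]
    rfl
  · have : α ^ n.factorial = 1 := hβ1
    exact Nat.le_of_dvd (Nat.factorial_pos n) (orderOf_dvd_of_pow_eq_one this)
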